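/- Let G be a connected bipartite (2p)-regular simple graph, where p ≥ 1. Let M_5(G) be the graph obtained from G by fusing a bouquet of p pentagons (5-cycles) to every vertex of G. Then M_5(G) is a nut graph. -/

import Mathlib

namespace NutPaper

open Matrix

variable {V : Type*}

open scoped Classical in
/-- The real adjacency matrix of a simple graph. -/
noncomputable def adjMat (G : SimpleGraph V) : Matrix V V ℝ :=
  Matrix.of fun u v => if G.Adj u v then (1 : ℝ) else 0

/-- A nut graph: the adjacency matrix has nullity exactly one, and every
nonzero kernel vector has all entries nonzero. -/
def IsNutGraph [Fintype V] (G : SimpleGraph V) : Prop :=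
  Module.finrank ℝ (LinearMap.ker (Matrix.mulVecLin (adjMat G))) = 1 ∧
  ∀ x : V → ℝ, adjMat G *ᵥ x = 0 → x ≠ 0 → ∀ v, x v ≠ 0

/-- The orbit of a vertex under the full automorphism group. -/
def vertexOrbit (G : SimpleGraph V) (v : V) : Set V :=
  {u | ∃ α : G ≃g G, α v = u}

/-- The set of vertex orbits. -/
def vertexOrbits (G : SimpleGraph V) : Set (Set V) :=
  Set.range (vertexOrbit G)

/-- The number of vertex orbits. -/
noncomputable def numVertexOrbits (G : SimpleGraph V) : ℕ :=
  Nat.card (vertexOrbits G)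

/-- The orbit of an edge under the full automorphism group. -/
def edgeOrbit (G : SimpleGraph V) (e : Sym2 V) : Set (Sym2 V) :=
  {f | ∃ α : G ≃g G, Sym2.map (⇑α) e = f}

/-- The set of edge orbits. -/
def edgeOrbits (G : SimpleGraph V) : Set (Set (Sym2 V)) :=
  edgeOrbit G '' G.edgeSet

/-- The number of edge orbits. -/
noncomputable def numEdgeOrbits (G : SimpleGraph V) : ℕ :=
  Nat.card (edgeOrbits G)


/-- The pentagon-multiplier construction `M₅(G)`: a bouquet of `p` pentagons is
fused to every vertex of `G`.  For each vertex `v` and each `i : Fin p`, the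
new vertices `(v, i, 0), (v, i, 1), (v, i, 2), (v, i, 3)` form, together with
`v`, the `i`-th pentagon at `v`, with edges
`v—(v,i,0)—(v,i,1)—(v,i,2)—(v,i,3)—v`. -/
def pentagonMultiplier (G : SimpleGraph V) (p : ℕ) :
    SimpleGraph (V ⊕ V × Fin p × Fin 4) :=
  SimpleGraph.fromRel (fun a b =>
    (∃ u v, a = Sum.inl u ∧ b = Sum.inl v ∧ G.Adj u v) ∨
    (∃ v i, a = Sum.inl v ∧ (b = Sum.inr (v, i, 0) ∨ b = Sum.inr (v, i, 3))) ∨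
    (∃ v i, (a = Sum.inr (v, i, 0) ∧ b = Sum.inr (v, i, 1)) ∨
            (a = Sum.inr (v, i, 1) ∧ b = Sum.inr (v, i, 2)) ∨
            (a = Sum.inr (v, i, 2) ∧ b = Sum.inr (v, i, 3))))

lemma adj_inl_inl (G : SimpleGraph V) (p : ℕ) (u v : V) :
    (pentagonMultiplier G p).Adj (Sum.inl u) (Sum.inl v) ↔ G.Adj u v := by
  simp only [pentagonMultiplier, SimpleGraph.fromRel_adj]
  constructor
  · rintro ⟨hne, h | h⟩ <;> rcases h with ⟨a, b, ha, hb, hadj⟩ | ⟨a, j, ha, hb | hb⟩ |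
      ⟨a, j, ⟨ha, hb⟩ | ⟨ha, hb⟩ | ⟨ha, hb⟩⟩ <;> simp_all [SimpleGraph.adj_comm]
  · intro h
    refine ⟨?_, Or.inl ?_⟩
    · rintro heq; rw [Sum.inl.injEq] at heq; subst heq; exact G.loopless.irrefl _ h
    · exact Or.inl ⟨u, v, rfl, rfl, h⟩

lemma adj_inl_inr (G : SimpleGraph V) (p : ℕ) (u : V) (w : V × Fin p × Fin 4) :
    (pentagonMultiplier G p).Adj (Sum.inl u) (Sum.inr w) ↔
      w.1 = u ∧ (w.2.2 = 0 ∨ w.2.2 = 3) := by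
  obtain ⟨v, i, k⟩ := w
  simp only [pentagonMultiplier, SimpleGraph.fromRel_adj]
  constructor
  · rintro ⟨hne, h | h⟩ <;> rcases h with ⟨a, b, ha, hb, hadj⟩ | ⟨a, j, ha, hb | hb⟩ |
      ⟨a, j, ⟨ha, hb⟩ | ⟨ha, hb⟩ | ⟨ha, hb⟩⟩ <;> simp_all
  · rintro ⟨rfl, hk⟩
    refine ⟨by simp, Or.inl (Or.inr (Or.inl ⟨v, i, rfl, ?_⟩))⟩
    rcases hk with rfl | rfl
    · exact Or.inl rfl
    · exact Or.inr rfl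

lemma adj_inr_inr (G : SimpleGraph V) (p : ℕ) (w w' : V × Fin p × Fin 4) :
    (pentagonMultiplier G p).Adj (Sum.inr w) (Sum.inr w') ↔
      w.1 = w'.1 ∧ w.2.1 = w'.2.1 ∧
      ((w.2.2 = 0 ∧ w'.2.2 = 1) ∨ (w.2.2 = 1 ∧ w'.2.2 = 0) ∨
       (w.2.2 = 1 ∧ w'.2.2 = 2) ∨ (w.2.2 = 2 ∧ w'.2.2 = 1) ∨
       (w.2.2 = 2 ∧ w'.2.2 = 3) ∨ (w.2.2 = 3 ∧ w'.2.2 = 2)) := by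
  obtain ⟨v, i, k⟩ := w
  obtain ⟨v', i', k'⟩ := w'
  simp only [pentagonMultiplier, SimpleGraph.fromRel_adj]
  constructor
  · rintro ⟨hne, h | h⟩ <;> rcases h with ⟨a, b, ha, hb, hadj⟩ | ⟨a, j, ha, hb | hb⟩ |
      ⟨a, j, ⟨ha, hb⟩ | ⟨ha, hb⟩ | ⟨ha, hb⟩⟩ <;> simp_all
  · rintro ⟨rfl, rfl, h⟩
    have hne : (Sum.inr (v, i, k) : V ⊕ V × Fin p × Fin 4) ≠ Sum.inr (v, i, k') := by
      rcases h with ⟨rfl, rfl⟩ | ⟨rfl, rfl⟩ | ⟨rfl, rfl⟩ | ⟨rfl, rfl⟩ | ⟨rfl, rfl⟩ | ⟨rfl, rfl⟩ <;>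
        simp
    refine ⟨hne, ?_⟩
    rcases h with ⟨rfl, rfl⟩ | ⟨rfl, rfl⟩ | ⟨rfl, rfl⟩ | ⟨rfl, rfl⟩ | ⟨rfl, rfl⟩ | ⟨rfl, rfl⟩
    · exact Or.inl (Or.inr (Or.inr ⟨v, i, Or.inl ⟨rfl, rfl⟩⟩))
    · exact Or.inr (Or.inr (Or.inr ⟨v, i, Or.inl ⟨rfl, rfl⟩⟩))
    · exact Or.inl (Or.inr (Or.inr ⟨v, i, Or.inr (Or.inl ⟨rfl, rfl⟩)⟩))
    · exact Or.inr (Or.inr (Or.inr ⟨v, i, Or.inr (Or.inl ⟨rfl, rfl⟩)⟩))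
    · exact Or.inl (Or.inr (Or.inr ⟨v, i, Or.inr (Or.inr ⟨rfl, rfl⟩)⟩))
    · exact Or.inr (Or.inr (Or.inr ⟨v, i, Or.inr (Or.inr ⟨rfl, rfl⟩)⟩))

lemma adj_inr_inl (G : SimpleGraph V) (p : ℕ) (u : V) (w : V × Fin p × Fin 4) :
    (pentagonMultiplier G p).Adj (Sum.inr w) (Sum.inl u) ↔
      w.1 = u ∧ (w.2.2 = 0 ∨ w.2.2 = 3) := by
  rw [SimpleGraph.adj_comm, adj_inl_inr]

lemma mulVec_inl [Fintype V] (G : SimpleGraph V) (p : ℕ)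
    (x : (V ⊕ V × Fin p × Fin 4) → ℝ) (v : V) :
    (adjMat (pentagonMultiplier G p) *ᵥ x) (Sum.inl v) =
      (∑ u : V, adjMat G v u * x (Sum.inl u))
        + ∑ i : Fin p, (x (Sum.inr (v, i, 0)) + x (Sum.inr (v, i, 3))) := by
  classical
  simp only [Matrix.mulVec, dotProduct, adjMat, Matrix.of_apply, ite_mul, one_mul,
    zero_mul]
  rw [Fintype.sum_sum_type]
  congr 1
  · exact Finset.sum_congr rfl fun u _ => by rw [adj_inl_inl]
  · rw [Fintype.sum_prod_type]
    simp only [adj_inl_inr, Fintype.sum_prod_type, Fin.sum_univ_four]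
    first
    | simp (config := { decide := true }) only []
    | skip
    rw [Finset.sum_comm]
    simp [Finset.sum_add_distrib, Finset.sum_ite_eq']

lemma mulVec_inr0 [Fintype V] (G : SimpleGraph V) (p : ℕ)
    (x : (V ⊕ V × Fin p × Fin 4) → ℝ) (v : V) (i : Fin p) :
    (adjMat (pentagonMultiplier G p) *ᵥ x) (Sum.inr (v, i, 0)) =
      x (Sum.inl v) + x (Sum.inr (v, i, 1)) := by
  classical
  simp only [Matrix.mulVec, dotProduct, adjMat, Matrix.of_apply, ite_mul, one_mul,
    zero_mul]
  rw [Fintype.sum_sum_type]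
  simp only [adj_inr_inl, adj_inr_inr]
  simp only [Fintype.sum_prod_type, Fin.sum_univ_four]
  first
    | simp (config := { decide := true }) only []
    | skip
  simp [Finset.sum_add_distrib, Finset.sum_ite_eq', Finset.sum_ite_eq, ite_and]

lemma mulVec_inr1 [Fintype V] (G : SimpleGraph V) (p : ℕ)
    (x : (V ⊕ V × Fin p × Fin 4) → ℝ) (v : V) (i : Fin p) :
    (adjMat (pentagonMultiplier G p) *ᵥ x) (Sum.inr (v, i, 1)) =
      x (Sum.inr (v, i, 0)) + x (Sum.inr (v, i, 2)) := by
  classical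
  simp only [Matrix.mulVec, dotProduct, adjMat, Matrix.of_apply, ite_mul, one_mul,
    zero_mul]
  rw [Fintype.sum_sum_type]
  simp only [adj_inr_inl, adj_inr_inr]
  simp only [Fintype.sum_prod_type, Fin.sum_univ_four]
  first
    | simp (config := { decide := true }) only []
    | skip
  simp [Finset.sum_add_distrib, Finset.sum_ite_eq', Finset.sum_ite_eq, ite_and]

lemma mulVec_inr2 [Fintype V] (G : SimpleGraph V) (p : ℕ)
    (x : (V ⊕ V × Fin p × Fin 4) → ℝ) (v : V) (i : Fin p) :
    (adjMat (pentagonMultiplier G p) *ᵥ x) (Sum.inr (v, i, 2)) =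
      x (Sum.inr (v, i, 1)) + x (Sum.inr (v, i, 3)) := by
  classical
  simp only [Matrix.mulVec, dotProduct, adjMat, Matrix.of_apply, ite_mul, one_mul,
    zero_mul]
  rw [Fintype.sum_sum_type]
  simp only [adj_inr_inl, adj_inr_inr]
  simp only [Fintype.sum_prod_type, Fin.sum_univ_four]
  first
    | simp (config := { decide := true }) only []
    | skip
  simp [Finset.sum_add_distrib, Finset.sum_ite_eq', Finset.sum_ite_eq, ite_and]

lemma mulVec_inr3 [Fintype V] (G : SimpleGraph V) (p : ℕ)
    (x : (V ⊕ V × Fin p × Fin 4) → ℝ) (v : V) (i : Fin p) :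
    (adjMat (pentagonMultiplier G p) *ᵥ x) (Sum.inr (v, i, 3)) =
      x (Sum.inr (v, i, 2)) + x (Sum.inl v) := by
  classical
  simp only [Matrix.mulVec, dotProduct, adjMat, Matrix.of_apply, ite_mul, one_mul,
    zero_mul]
  rw [Fintype.sum_sum_type]
  simp only [adj_inr_inl, adj_inr_inr]
  simp only [Fintype.sum_prod_type, Fin.sum_univ_four]
  first
    | simp (config := { decide := true }) only []
    | skip
  simp [Finset.sum_add_distrib, Finset.sum_ite_eq', Finset.sum_ite_eq, ite_and]
  ring

open scoped Classical in
lemma adjMat_apply (G : SimpleGraph V) (u v : V) :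
    adjMat G u v = if G.Adj u v then (1 : ℝ) else 0 := rfl

lemma adjMat_nonneg (G : SimpleGraph V) (u v : V) : 0 ≤ adjMat G u v := by
  rw [adjMat_apply]; split_ifs <;> norm_num

lemma adjMat_of_adj (G : SimpleGraph V) {u v : V} (h : G.Adj u v) : adjMat G u v = 1 := by
  rw [adjMat_apply, if_pos h]

lemma adjMat_of_not_adj (G : SimpleGraph V) {u v : V} (h : ¬ G.Adj u v) : adjMat G u v = 0 := by
  rw [adjMat_apply, if_neg h]

/-- Maximum principle: an eigenvector for the eigenvalue `d` of a `d`-regular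
connected graph is constant. -/
lemma const_of_eigen [Fintype V] (G : SimpleGraph V) (hconn : G.Connected) (d : ℝ)
    (hone : ∀ v : V, (∑ u : V, adjMat G v u) = d) (y : V → ℝ)
    (hy : ∀ v : V, (∑ u : V, adjMat G v u * y u) = d * y v) :
    ∃ c, ∀ v, y v = c := by
  have hne : Nonempty V := hconn.nonempty
  obtain ⟨v0, -, hmax⟩ := Finset.exists_max_image (Finset.univ : Finset V) y ⟨hne.some, by simp⟩
  refine ⟨y v0, ?_⟩
  have step : ∀ a b : V, G.Adj a b → y a = y v0 → y b = y v0 := by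
    intro a b hab ha
    by_contra hb
    have hblt : y b < y v0 := lt_of_le_of_ne (hmax b (Finset.mem_univ b)) hb
    have hlt : (∑ u : V, adjMat G a u * y u) < ∑ u : V, adjMat G a u * y v0 := by
      refine Finset.sum_lt_sum (fun u _ => ?_) ⟨b, Finset.mem_univ b, ?_⟩
      · exact mul_le_mul_of_nonneg_left (hmax u (Finset.mem_univ u)) (adjMat_nonneg G a u)
      · rw [adjMat_of_adj G hab, one_mul, one_mul]; exact hblt
    rw [hy a, ha, ← Finset.sum_mul, hone a] at hlt
    exact lt_irrefl _ hlt
  have walk : ∀ (a b : V), G.Walk a b → y a = y v0 → y b = y v0 := by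
    intro a b w
    induction w with
    | nil => exact id
    | cons h q ih => intro ha; exact ih (step _ _ h ha)
  intro v
  obtain ⟨w⟩ := hconn.preconnected v0 v
  exact walk _ _ w rfl


/-- If `G` is a connected bipartite `2p`-regular graph with
`p ≥ 1`, then `M₅(G)` is a nut graph. -/
theorem pentagonMultiplier_isNutGraph {V : Type*} [Fintype V]
    (G : SimpleGraph V) [DecidableRel G.Adj] (p : ℕ) (hp : 1 ≤ p)
    (hconn : G.Connected) (hbip : G.Colorable 2)
    (hreg : G.IsRegularOfDegree (2 * p)) :
    IsNutGraph (pentagonMultiplier G p) := by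
  classical
  obtain ⟨C⟩ := hbip
  obtain ⟨v0⟩ := hconn.nonempty
  set s : V → ℝ := fun v => if C v = 0 then 1 else -1 with hs
  have hs1 : ∀ v, s v = 1 ∨ s v = -1 := fun v => by
    by_cases h : C v = 0 <;> simp [hs, h]
  have hsne : ∀ v, s v ≠ 0 := by
    intro v; rcases hs1 v with h | h <;> rw [h] <;> norm_num
  have hss : ∀ v, s v * s v = 1 := by
    intro v; rcases hs1 v with h | h <;> rw [h] <;> norm_num
  have hsadj : ∀ {u v}, G.Adj u v → s u = -(s v) := by
    intro u v h
    have hne : C u ≠ C v := C.valid h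
    have h2 : ∀ a : Fin 2, a = 0 ∨ a = 1 := by decide
    rcases h2 (C u) with hu | hu <;> rcases h2 (C v) with hv | hv <;>
      simp [hs, hu, hv] at hne ⊢
  set z : (V ⊕ V × Fin p × Fin 4) → ℝ :=
    Sum.elim s (fun w => (if w.2.2 = 0 ∨ w.2.2 = 3 then (1:ℝ) else -1) * s w.1) with hz
  have hone : ∀ v : V, (∑ u : V, adjMat G v u) = (2 * p : ℝ) := by
    intro v
    have h1 : ∀ u : V, adjMat G v u = if u ∈ G.neighborFinset v then (1:ℝ) else 0 := by
      intro u; rw [adjMat_apply]; simp [SimpleGraph.mem_neighborFinset]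
    rw [Finset.sum_congr rfl (fun u _ => h1 u), Finset.sum_ite_mem, Finset.univ_inter,
      Finset.sum_const, nsmul_eq_mul, mul_one]
    have := hreg v
    rw [SimpleGraph.degree] at this
    rw [this]; push_cast; ring
  have hzker : adjMat (pentagonMultiplier G p) *ᵥ z = 0 := by
    funext w
    rcases w with v | ⟨v, i, k⟩
    · rw [mulVec_inl, Pi.zero_apply]
      have h1 : ∀ u : V, adjMat G v u * z (Sum.inl u) = adjMat G v u * (-(s v)) := by
        intro u
        by_cases h : G.Adj v u
        · have hsu : s u = -(s v) := by
            have := hsadj h.symm; linarith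
          simp [hz, hsu]
        · rw [adjMat_of_not_adj G h]; ring
      rw [Finset.sum_congr rfl (fun u _ => h1 u)]
      have h2 : ∀ j : Fin p, z (Sum.inr (v, j, (0 : Fin 4))) + z (Sum.inr (v, j, (3 : Fin 4)))
          = 2 * s v := by
        intro j; simp [hz]; ring
      rw [Finset.sum_congr rfl (fun j _ => h2 j), ← Finset.sum_mul, hone v,
        Finset.sum_const, Finset.card_univ, Fintype.card_fin, nsmul_eq_mul]
      push_cast; ring
    · have hk : k = 0 ∨ k = 1 ∨ k = 2 ∨ k = 3 := by omega
      rcases hk with rfl | rfl | rfl | rfl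
      · rw [mulVec_inr0, Pi.zero_apply]; simp [hz]
      · rw [mulVec_inr1, Pi.zero_apply]; simp [hz]
      · rw [mulVec_inr2, Pi.zero_apply]; simp [hz]
      · rw [mulVec_inr3, Pi.zero_apply]; simp [hz]
  have hzne : z ≠ 0 := by
    intro h
    have h0 := congrFun h (Sum.inl v0)
    rw [Pi.zero_apply] at h0
    exact hsne v0 (by simpa [hz] using h0)
  have hker : ∀ x : (V ⊕ V × Fin p × Fin 4) → ℝ,
      adjMat (pentagonMultiplier G p) *ᵥ x = 0 → ∃ c : ℝ, x = c • z := by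
    intro x hx
    have heq : ∀ w, (adjMat (pentagonMultiplier G p) *ᵥ x) w = 0 := by
      intro w; rw [hx]; rfl
    have e0 : ∀ (v : V) (i : Fin p), x (Sum.inl v) + x (Sum.inr (v, i, 1)) = 0 := by
      intro v i; have := heq (Sum.inr (v, i, 0)); rwa [mulVec_inr0] at this
    have e1 : ∀ (v : V) (i : Fin p), x (Sum.inr (v, i, 0)) + x (Sum.inr (v, i, 2)) = 0 := by
      intro v i; have := heq (Sum.inr (v, i, 1)); rwa [mulVec_inr1] at this
    have e2 : ∀ (v : V) (i : Fin p), x (Sum.inr (v, i, 1)) + x (Sum.inr (v, i, 3)) = 0 := by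
      intro v i; have := heq (Sum.inr (v, i, 2)); rwa [mulVec_inr2] at this
    have e3 : ∀ (v : V) (i : Fin p), x (Sum.inr (v, i, 2)) + x (Sum.inl v) = 0 := by
      intro v i; have := heq (Sum.inr (v, i, 3)); rwa [mulVec_inr3] at this
    have f0 : ∀ (v : V) (i : Fin p), x (Sum.inr (v, i, 0)) = x (Sum.inl v) := by
      intro v i; linarith [e0 v i, e1 v i, e2 v i, e3 v i]
    have f1 : ∀ (v : V) (i : Fin p), x (Sum.inr (v, i, 1)) = -x (Sum.inl v) := by
      intro v i; linarith [e0 v i]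
    have f2 : ∀ (v : V) (i : Fin p), x (Sum.inr (v, i, 2)) = -x (Sum.inl v) := by
      intro v i; linarith [e3 v i]
    have f3 : ∀ (v : V) (i : Fin p), x (Sum.inr (v, i, 3)) = x (Sum.inl v) := by
      intro v i; linarith [e2 v i, e0 v i]
    have hvsum : ∀ v : V, (∑ u : V, adjMat G v u * x (Sum.inl u))
        = -(2 * p : ℝ) * x (Sum.inl v) := by
      intro v
      have h := heq (Sum.inl v)
      rw [mulVec_inl] at h
      have hsum2 : (∑ i : Fin p, (x (Sum.inr (v, i, 0)) + x (Sum.inr (v, i, 3))))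
          = (p : ℝ) * (2 * x (Sum.inl v)) := by
        rw [Finset.sum_congr rfl (fun i _ => by rw [f0 v i, f3 v i])]
        rw [Finset.sum_const, Finset.card_univ, Fintype.card_fin, nsmul_eq_mul]
        ring
      rw [hsum2] at h
      push_cast at h ⊢
      linarith
    set y : V → ℝ := fun v => s v * x (Sum.inl v) with hy
    have hyeig : ∀ v : V, (∑ u : V, adjMat G v u * y u) = (2 * p : ℝ) * y v := by
      intro v
      have h1 : ∀ u : V, adjMat G v u * y u
          = -(s v) * (adjMat G v u * x (Sum.inl u)) := by
        intro u
        by_cases h : G.Adj v u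
        · have hsu : s u = -(s v) := by
            have := hsadj h.symm; linarith
          simp only [hy, hsu]; ring
        · rw [adjMat_of_not_adj G h]; ring
      rw [Finset.sum_congr rfl (fun u _ => h1 u), ← Finset.mul_sum, hvsum v]
      simp only [hy]
      ring
    obtain ⟨c, hc⟩ := const_of_eigen G hconn (2 * p : ℝ) hone y hyeig
    refine ⟨c, ?_⟩
    have hxinl : ∀ v : V, x (Sum.inl v) = c * s v := by
      intro v
      have h1 : s v * x (Sum.inl v) = c := hc v
      have h2 := hss v
      have : s v * (s v * x (Sum.inl v)) = s v * c := by rw [h1]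
      calc x (Sum.inl v) = (s v * s v) * x (Sum.inl v) := by rw [h2]; ring
        _ = s v * (s v * x (Sum.inl v)) := by ring
        _ = s v * c := by rw [h1]
        _ = c * s v := by ring
    funext w
    rcases w with v | ⟨v, i, k⟩
    · simp only [Pi.smul_apply, smul_eq_mul, hz, Sum.elim_inl]
      exact hxinl v
    · have hk : k = 0 ∨ k = 1 ∨ k = 2 ∨ k = 3 := by omega
      rcases hk with rfl | rfl | rfl | rfl
      · simp only [Pi.smul_apply, smul_eq_mul, hz, Sum.elim_inr]
        rw [f0 v i, hxinl v]; simp (config := { decide := true })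
      · simp only [Pi.smul_apply, smul_eq_mul, hz, Sum.elim_inr]
        rw [f1 v i, hxinl v]; simp (config := { decide := true })
      · simp only [Pi.smul_apply, smul_eq_mul, hz, Sum.elim_inr]
        rw [f2 v i, hxinl v]; simp (config := { decide := true })
      · simp only [Pi.smul_apply, smul_eq_mul, hz, Sum.elim_inr]
        rw [f3 v i, hxinl v]; simp (config := { decide := true })
  constructor
  · have hkereq : LinearMap.ker (Matrix.mulVecLin (adjMat (pentagonMultiplier G p)))
        = Submodule.span ℝ {z} := by
      apply le_antisymm
      · intro x hx
        rw [LinearMap.mem_ker, Matrix.mulVecLin_apply] at hx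
        obtain ⟨c, hc⟩ := hker x hx
        rw [Submodule.mem_span_singleton]
        exact ⟨c, hc.symm⟩
      · rw [Submodule.span_le, Set.singleton_subset_iff]
        exact LinearMap.mem_ker.mpr (by rw [Matrix.mulVecLin_apply]; exact hzker)
    rw [hkereq]
    exact finrank_span_singleton hzne
  · intro x hx hxne w
    obtain ⟨c, hc⟩ := hker x hx
    have hcne : c ≠ 0 := by
      rintro rfl
      rw [hc] at hxne
      simp at hxne
    rw [hc]
    rcases w with v | ⟨v, i, k⟩
    · simp only [Pi.smul_apply, smul_eq_mul, hz, Sum.elim_inl]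
      exact mul_ne_zero hcne (hsne v)
    · have hk : k = 0 ∨ k = 1 ∨ k = 2 ∨ k = 3 := by omega
      rcases hk with rfl | rfl | rfl | rfl <;>
      · simp only [Pi.smul_apply, smul_eq_mul, hz, Sum.elim_inr]
        refine mul_ne_zero hcne (mul_ne_zero ?_ (hsne v))
        simp (config := { decide := true })


end NutPaper
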